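/- Let X₁,...,X_N be i.i.d. random variables supported on [0,1] with mean μ where N = ⌈8κ⌉ for some κ ≥ 1, and define μ̄(n) = (1/n)·Σ_{j≤n} Xⱼ. Then the event {√n·|μ̄(n) − μ| ≤ √(log(8κ)) for all n = 1,...,N} holds with probability at least 1 − 1/(4κ). -/

import Mathlib

open MeasureTheory ProbabilityTheory
open scoped ENNReal NNReal
open Real

lemma hoeffding_core (p : ℝ) (hp0 : 0 ≤ p) (hp1 : p ≤ 1) (t : ℝ) :
    1 - p + p * exp t ≤ exp (p * t + t ^ 2 / 8) := by
  have hpos : ∀ s : ℝ, 0 < 1 - p + p * exp s := by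
    intro s
    rcases lt_or_eq_of_le hp1 with h | h
    · nlinarith [exp_pos s]
    · nlinarith [exp_pos s]
  set F : ℝ → ℝ := fun s => p * s + s ^ 2 / 8 - Real.log (1 - p + p * exp s) with hF
  set G : ℝ → ℝ := fun s => p + s / 4 - p * exp s / (1 - p + p * exp s) with hG
  have hh : ∀ s : ℝ, HasDerivAt (fun s => 1 - p + p * exp s) (p * exp s) s := by
    intro s
    simpa using ((Real.hasDerivAt_exp s).const_mul p).const_add (1 - p)
  have hFd : ∀ s : ℝ, HasDerivAt F (G s) s := by
    intro s
    have h1 : HasDerivAt (fun s : ℝ => p * s + s ^ 2 / 8) (p + s / 4) s := by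
      have := ((hasDerivAt_id s).const_mul p).add ((hasDerivAt_pow 2 s).div_const 8)
      exact this.congr_deriv (by norm_num; ring)
    have h2 : HasDerivAt (fun s => Real.log (1 - p + p * exp s))
        (p * exp s / (1 - p + p * exp s)) s := (hh s).log (hpos s).ne'
    exact h1.sub h2
  have hGd : ∀ s : ℝ, HasDerivAt G
      (1 / 4 - (p * exp s * (1 - p + p * exp s) - p * exp s * (p * exp s)) /
        (1 - p + p * exp s) ^ 2) s := by
    intro s
    have hq : HasDerivAt (fun s => p * exp s / (1 - p + p * exp s))
        ((p * exp s * (1 - p + p * exp s) - p * exp s * (p * exp s)) /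
          (1 - p + p * exp s) ^ 2) s :=
      ((Real.hasDerivAt_exp s).const_mul p).div (hh s) (hpos s).ne'
    have h1 : HasDerivAt (fun s : ℝ => p + s / 4) (1 / 4) s := by
      simpa using ((hasDerivAt_id s).div_const 4).const_add p
    exact h1.sub hq
  have hGd' : ∀ s : ℝ, 0 ≤ 1 / 4 - (p * exp s * (1 - p + p * exp s) -
      p * exp s * (p * exp s)) / (1 - p + p * exp s) ^ 2 := by
    intro s
    have hh0 : 0 < 1 - p + p * exp s := hpos s
    rw [sub_nonneg, div_le_iff₀ (by positivity)]
    nlinarith [sq_nonneg ((1 - p + p * exp s) - 2 * (p * exp s))]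
  have hGmono : Monotone G := by
    refine monotone_of_deriv_nonneg (fun s => (hGd s).differentiableAt) ?_
    intro s
    rw [(hGd s).deriv]
    exact hGd' s
  have hG0 : G 0 = 0 := by
    simp [hG]
  have hF0 : F 0 = 0 := by
    simp [hF]
  have hFnonneg : ∀ s : ℝ, 0 ≤ F s := by
    intro s
    rcases le_or_gt 0 s with hs | hs
    · have hmono : MonotoneOn F (Set.Ici (0 : ℝ)) := by
        refine monotoneOn_of_deriv_nonneg (convex_Ici 0)
          (fun x _ => (hFd x).continuousAt.continuousWithinAt)
          (fun x hx => (hFd x).differentiableAt.differentiableWithinAt) ?_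
        intro x hx
        rw [(hFd x).deriv]
        have := hGmono (le_of_lt (by simpa using hx) : (0:ℝ) ≤ x)
        rw [hG0] at this
        exact this
      have := hmono Set.self_mem_Ici (Set.mem_Ici.2 hs) hs
      rwa [hF0] at this
    · have hmono : AntitoneOn F (Set.Iic (0 : ℝ)) := by
        refine antitoneOn_of_deriv_nonpos (convex_Iic 0)
          (fun x _ => (hFd x).continuousAt.continuousWithinAt)
          (fun x hx => (hFd x).differentiableAt.differentiableWithinAt) ?_
        intro x hx
        rw [(hFd x).deriv]
        have := hGmono (le_of_lt (by simpa using hx) : x ≤ 0)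
        rw [hG0] at this
        exact this
      have := hmono (Set.mem_Iic.2 hs.le) Set.self_mem_Iic hs.le
      rwa [hF0] at this
  have key := hFnonneg t
  have hlog : Real.log (1 - p + p * exp t) ≤ p * t + t ^ 2 / 8 := by
    simp only [hF] at key; linarith
  calc 1 - p + p * exp t = exp (Real.log (1 - p + p * exp t)) := (exp_log (hpos t)).symm
    _ ≤ exp (p * t + t ^ 2 / 8) := exp_le_exp.2 hlog

lemma mgf_le_of_Icc {Ω : Type*} [MeasurableSpace Ω] (P : Measure Ω) [IsProbabilityMeasure P]
    (Y : Ω → ℝ) (hY : Measurable Y) (hb : ∀ᵐ ω ∂P, Y ω ∈ Set.Icc (0:ℝ) 1)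
    (μ : ℝ) (hm : ∫ ω, Y ω ∂P = μ) (t : ℝ) :
    mgf Y P t ≤ exp (μ * t + t ^ 2 / 8) := by
  have hYint : Integrable Y P := by
    refine (integrable_const (1:ℝ)).mono' hY.aestronglyMeasurable ?_
    filter_upwards [hb] with ω h
    rw [Real.norm_eq_abs]
    exact abs_le.2 ⟨by linarith [h.1], h.2⟩
  have hμ0 : 0 ≤ μ := hm ▸ integral_nonneg_of_ae (by filter_upwards [hb] with ω h using h.1)
  have hμ1 : μ ≤ 1 := by
    have h1 : ∫ ω, Y ω ∂P ≤ ∫ _, (1:ℝ) ∂P :=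
      integral_mono_ae hYint (integrable_const 1) (by filter_upwards [hb] with ω h using h.2)
    simpa [hm] using h1
  have hexp_int : Integrable (fun ω => exp (t * Y ω)) P := by
    refine (integrable_const (exp |t|)).mono' ((hY.const_mul t).exp).aestronglyMeasurable ?_
    filter_upwards [hb] with ω h
    rw [Real.norm_eq_abs, Real.abs_exp]
    refine Real.exp_le_exp.2 ?_
    calc t * Y ω ≤ |t| * Y ω := mul_le_mul_of_nonneg_right (le_abs_self t) h.1
      _ ≤ |t| := mul_le_of_le_one_right (abs_nonneg t) h.2
  have hpt : ∀ᵐ ω ∂P, exp (t * Y ω) ≤ 1 - Y ω + Y ω * exp t := by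
    filter_upwards [hb] with ω h
    have hc := convexOn_exp.2 (Set.mem_univ (0:ℝ)) (Set.mem_univ t)
      (by linarith [h.2] : (0:ℝ) ≤ 1 - Y ω) h.1 (by ring)
    simp only [smul_eq_mul, mul_zero, zero_add, Real.exp_zero, mul_one] at hc
    rw [mul_comm]; exact hc
  have hRint : Integrable (fun ω => 1 - Y ω + Y ω * exp t) P :=
    ((integrable_const (1:ℝ)).sub hYint).add (hYint.mul_const (exp t))
  have h2 : mgf Y P t ≤ ∫ ω, (1 - Y ω + Y ω * exp t) ∂P :=
    integral_mono_ae hexp_int hRint hpt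
  have h3 : ∫ ω, (1 - Y ω + Y ω * exp t) ∂P = 1 - μ + μ * exp t := by
    have e1 : ∫ ω, (1 - Y ω + Y ω * exp t) ∂P
        = (∫ ω, (1 - Y ω) ∂P) + ∫ ω, Y ω * exp t ∂P :=
      integral_add ((integrable_const (1:ℝ)).sub hYint) (hYint.mul_const (exp t))
    have e2 : ∫ ω, (1 - Y ω) ∂P = (∫ _, (1:ℝ) ∂P) - ∫ ω, Y ω ∂P :=
      integral_sub (integrable_const 1) hYint
    rw [e1, e2, integral_mul_const, integral_const, hm]
    simp
  rw [h3] at h2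
  exact h2.trans (hoeffding_core μ hμ0 hμ1 t)

lemma hoeff_tails {Ω : Type*} [MeasurableSpace Ω] (P : Measure Ω) [IsProbabilityMeasure P]
    (X : ℕ → Ω → ℝ) (hmeas : ∀ j, Measurable (X j))
    (hindep : iIndepFun X P)
    (hbdd : ∀ j, ∀ᵐ ω ∂P, X j ω ∈ Set.Icc (0 : ℝ) 1)
    (μ : ℝ) (hmean : ∀ j, ∫ ω, X j ω ∂P = μ)
    (n : ℕ) (hn : 1 ≤ n) (s : ℝ) (hs : 0 < s) :
    (P {ω | (n:ℝ) * μ + s ≤ (∑ j ∈ Finset.range n, X j) ω}).toReal ≤ exp (-(2 * s ^ 2 / n)) ∧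
    (P {ω | (∑ j ∈ Finset.range n, X j) ω ≤ (n:ℝ) * μ - s}).toReal ≤ exp (-(2 * s ^ 2 / n)) := by
  have hn0 : (0:ℝ) < n := by exact_mod_cast hn
  set S : Ω → ℝ := ∑ j ∈ Finset.range n, X j with hS
  have hSeq : S = fun ω => ∑ j ∈ Finset.range n, X j ω := by
    funext ω; simp [hS, Finset.sum_apply]
  have hSmeas : Measurable S := by
    rw [hSeq]; exact Finset.measurable_sum _ (fun j _ => hmeas j)
  have hball : ∀ᵐ ω ∂P, ∀ j, X j ω ∈ Set.Icc (0:ℝ) 1 := ae_all_iff.2 hbdd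
  have hSb : ∀ᵐ ω ∂P, S ω ∈ Set.Icc (0:ℝ) (n:ℝ) := by
    filter_upwards [hball] with ω h
    constructor
    · simp only [hS, Finset.sum_apply]
      exact Finset.sum_nonneg fun j _ => (h j).1
    · simp only [hS, Finset.sum_apply]
      calc ∑ j ∈ Finset.range n, X j ω ≤ ∑ j ∈ Finset.range n, (1:ℝ) :=
            Finset.sum_le_sum fun j _ => (h j).2
        _ = n := by simp
  have hint : ∀ t : ℝ, Integrable (fun ω => exp (t * S ω)) P := by
    intro t
    refine (integrable_const (exp (|t| * n))).mono'
      ((hSmeas.const_mul t).exp).aestronglyMeasurable ?_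
    filter_upwards [hSb] with ω h
    rw [Real.norm_eq_abs, Real.abs_exp]
    refine Real.exp_le_exp.2 ?_
    calc t * S ω ≤ |t| * S ω := mul_le_mul_of_nonneg_right (le_abs_self t) h.1
      _ ≤ |t| * n := mul_le_mul_of_nonneg_left h.2 (abs_nonneg t)
  have hmgf : ∀ t : ℝ, mgf S P t ≤ exp ((n:ℝ) * (μ * t + t ^ 2 / 8)) := by
    intro t
    rw [hS, hindep.mgf_sum hmeas (Finset.range n)]
    calc ∏ j ∈ Finset.range n, mgf (X j) P t
        ≤ ∏ j ∈ Finset.range n, exp (μ * t + t ^ 2 / 8) :=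
          Finset.prod_le_prod (fun j _ => mgf_nonneg)
            (fun j _ => mgf_le_of_Icc P (X j) (hmeas j) (hbdd j) μ (hmean j) t)
      _ = exp ((n:ℝ) * (μ * t + t ^ 2 / 8)) := by
          rw [Finset.prod_const, Finset.card_range, ← Real.exp_nat_mul]
  constructor
  · set t : ℝ := 4 * s / n with ht
    have ht0 : 0 ≤ t := by positivity
    have h1 := measure_ge_le_exp_mul_mgf (X := S) (μ := P) ((n:ℝ) * μ + s) ht0 (hint t)
    refine h1.trans ?_
    calc exp (-t * ((n:ℝ) * μ + s)) * mgf S P t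
        ≤ exp (-t * ((n:ℝ) * μ + s)) * exp ((n:ℝ) * (μ * t + t ^ 2 / 8)) := by
          exact mul_le_mul_of_nonneg_left (hmgf t) (exp_pos _).le
      _ = exp (-(2 * s ^ 2 / n)) := by
          rw [← Real.exp_add]
          congr 1
          rw [ht]
          field_simp
          ring
  · set t : ℝ := -(4 * s / n) with ht
    have ht0 : t ≤ 0 := by rw [ht]; exact neg_nonpos.2 (by positivity)
    have h1 := measure_le_le_exp_mul_mgf (X := S) (μ := P) ((n:ℝ) * μ - s) ht0 (hint t)
    refine h1.trans ?_
    calc exp (-t * ((n:ℝ) * μ - s)) * mgf S P t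
        ≤ exp (-t * ((n:ℝ) * μ - s)) * exp ((n:ℝ) * (μ * t + t ^ 2 / 8)) := by
          exact mul_le_mul_of_nonneg_left (hmgf t) (exp_pos _).le
      _ = exp (-(2 * s ^ 2 / n)) := by
          rw [← Real.exp_add]
          congr 1
          rw [ht]
          field_simp
          ring

/-- Small-sample concentration: for i.i.d. `[0,1]`-valued random variables with mean `μ`
and `N = ⌈8κ⌉` with `κ ≥ 1`, the event `√n·|μ̄(n) − μ| ≤ √(log(8κ))` for all
`n = 1,…,N` holds with probability at least `1 − 1/(4κ)`. -/
theorem small_sample_concentration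
    {Ω : Type*} [MeasurableSpace Ω] (P : Measure Ω) [IsProbabilityMeasure P]
    (X : ℕ → Ω → ℝ) (hmeas : ∀ j, Measurable (X j))
    (hindep : iIndepFun X P)
    (hident : ∀ j, P.map (X j) = P.map (X 0))
    (hbdd : ∀ j, ∀ᵐ ω ∂P, X j ω ∈ Set.Icc (0 : ℝ) 1)
    (μ : ℝ) (hmean : ∀ j, ∫ ω, X j ω ∂P = μ)
    (κ : ℝ) (hκ : 1 ≤ κ) (N : ℕ) (hN : N = ⌈8 * κ⌉₊) :
    ENNReal.ofReal (1 - 1 / (4 * κ)) ≤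
      P {ω | ∀ n ∈ Finset.Icc 1 N,
        Real.sqrt n * |(∑ j ∈ Finset.range n, X j ω) / n - μ| ≤
          Real.sqrt (Real.log (8 * κ))} := by
  have hκ0 : (0:ℝ) < κ := by linarith
  have h8κ : (0:ℝ) < 8 * κ := by linarith
  set L : ℝ := Real.sqrt (Real.log (8 * κ)) with hLdef
  have hlog1 : 1 ≤ Real.log (8 * κ) := by
    have h1 : Real.exp 1 < 8 * κ := by
      have := Real.exp_one_lt_d9
      nlinarith
    exact le_of_lt ((Real.lt_log_iff_exp_lt h8κ).2 h1)
  have hlog0 : 0 ≤ Real.log (8 * κ) := by linarith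
  have hL1 : 1 ≤ L := by
    have h := Real.sqrt_le_sqrt hlog1
    rw [Real.sqrt_one] at h
    exact h
  have hL0 : 0 < L := by linarith
  -- μ ∈ [0,1]
  have hX0int : Integrable (X 0) P := by
    refine (integrable_const (1:ℝ)).mono' (hmeas 0).aestronglyMeasurable ?_
    filter_upwards [hbdd 0] with ω h
    rw [Real.norm_eq_abs]; exact abs_le.2 ⟨by linarith [h.1], h.2⟩
  have hμ0 : 0 ≤ μ := (hmean 0) ▸ integral_nonneg_of_ae
    (by filter_upwards [hbdd 0] with ω h using h.1)
  have hμ1 : μ ≤ 1 := by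
    have h1 : ∫ ω, X 0 ω ∂P ≤ ∫ _, (1:ℝ) ∂P :=
      integral_mono_ae hX0int (integrable_const 1)
        (by filter_upwards [hbdd 0] with ω h using h.2)
    simpa [hmean 0] using h1
  -- the per-n good sets
  set A : ℕ → Set Ω := fun n =>
    {ω | Real.sqrt n * |(∑ j ∈ Finset.range n, X j ω) / n - μ| ≤ L} with hAdef
  have hAmeas : ∀ n, MeasurableSet (A n) := by
    intro n
    have hf : Measurable fun ω => Real.sqrt n *
        |(∑ j ∈ Finset.range n, X j ω) / n - μ| := by
      have hsum : Measurable fun ω => ∑ j ∈ Finset.range n, X j ω :=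
        Finset.measurable_sum _ (fun j _ => hmeas j)
      exact (((hsum.div_const _).sub measurable_const).abs).const_mul _
    exact measurableSet_le hf measurable_const
  have hGeq : {ω | ∀ n ∈ Finset.Icc 1 N,
      Real.sqrt n * |(∑ j ∈ Finset.range n, X j ω) / n - μ| ≤ L}
      = ⋂ n ∈ Finset.Icc 1 N, A n := by
    ext ω; simp [hAdef]
  have hGmeas : MeasurableSet {ω | ∀ n ∈ Finset.Icc 1 N,
      Real.sqrt n * |(∑ j ∈ Finset.range n, X j ω) / n - μ| ≤ L} := by
    rw [hGeq]
    exact Finset.measurableSet_biInter _ (fun n _ => hAmeas n)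
  have hAbound : ∀ n, 1 ≤ n → P ((A n)ᶜ) ≤ ENNReal.ofReal (1 / (32 * κ ^ 2)) := by
    intro n hn
    have hn0 : (0:ℝ) < n := by exact_mod_cast hn
    set s : ℝ := Real.sqrt n * L with hsdef
    have hs0 : 0 < s := by positivity
    have hsub : (A n)ᶜ ⊆ {ω | (n:ℝ) * μ + s ≤ ∑ j ∈ Finset.range n, X j ω}
        ∪ {ω | ∑ j ∈ Finset.range n, X j ω ≤ (n:ℝ) * μ - s} := by
      intro ω hω
      simp only [hAdef, Set.mem_compl_iff, Set.mem_setOf_eq, not_le] at hω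
      have hsq : Real.sqrt n * Real.sqrt n = (n:ℝ) := Real.mul_self_sqrt hn0.le
      have hrw : (∑ j ∈ Finset.range n, X j ω) / n - μ
          = ((∑ j ∈ Finset.range n, X j ω) - n * μ) / n := by field_simp
      rw [hrw, abs_div, abs_of_pos hn0] at hω
      have hkey : s ≤ |(∑ j ∈ Finset.range n, X j ω) - n * μ| := by
        have h2 : Real.sqrt n * L < Real.sqrt n *
            (Real.sqrt n * (|(∑ j ∈ Finset.range n, X j ω) - n * μ| / n)) :=
          mul_lt_mul_of_pos_left hω (by positivity)
        have h3 : Real.sqrt n * (Real.sqrt n *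
            (|(∑ j ∈ Finset.range n, X j ω) - n * μ| / n))
            = |(∑ j ∈ Finset.range n, X j ω) - n * μ| := by
          rw [← mul_assoc, hsq]; field_simp
        rw [h3] at h2
        exact le_of_lt h2
      rcases le_abs.1 hkey with h | h
      · left; simp only [Set.mem_setOf_eq]; linarith
      · right; simp only [Set.mem_setOf_eq]; linarith
    have htails := hoeff_tails P X hmeas hindep hbdd μ hmean n hn s hs0
    simp only [Finset.sum_apply] at htails
    have he : Real.exp (-(2 * s ^ 2 / n)) = ((8 * κ) ^ 2)⁻¹ := by
      have hs2 : s ^ 2 = (n:ℝ) * Real.log (8 * κ) := by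
        rw [hsdef, mul_pow, Real.sq_sqrt hn0.le, Real.sq_sqrt hlog0]
      have : -(2 * s ^ 2 / n) = -Real.log ((8 * κ) ^ 2) := by
        rw [hs2, Real.log_pow]
        field_simp
        ring
      rw [this, Real.exp_neg, Real.exp_log (by positivity)]
    have hup : P {ω | (n:ℝ) * μ + s ≤ ∑ j ∈ Finset.range n, X j ω}
        ≤ ENNReal.ofReal (((8 * κ) ^ 2)⁻¹) := by
      rw [← he]
      exact (ENNReal.le_ofReal_iff_toReal_le (measure_ne_top P _) (Real.exp_pos _).le).2 htails.1
    have hlo : P {ω | ∑ j ∈ Finset.range n, X j ω ≤ (n:ℝ) * μ - s}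
        ≤ ENNReal.ofReal (((8 * κ) ^ 2)⁻¹) := by
      rw [← he]
      exact (ENNReal.le_ofReal_iff_toReal_le (measure_ne_top P _) (Real.exp_pos _).le).2 htails.2
    calc P ((A n)ᶜ) ≤ P ({ω | (n:ℝ) * μ + s ≤ ∑ j ∈ Finset.range n, X j ω}
          ∪ {ω | ∑ j ∈ Finset.range n, X j ω ≤ (n:ℝ) * μ - s}) := measure_mono hsub
      _ ≤ P {ω | (n:ℝ) * μ + s ≤ ∑ j ∈ Finset.range n, X j ω}
          + P {ω | ∑ j ∈ Finset.range n, X j ω ≤ (n:ℝ) * μ - s} := measure_union_le _ _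
      _ ≤ ENNReal.ofReal (((8 * κ) ^ 2)⁻¹) + ENNReal.ofReal (((8 * κ) ^ 2)⁻¹) :=
          add_le_add hup hlo
      _ ≤ ENNReal.ofReal (1 / (32 * κ ^ 2)) := by
          rw [← ENNReal.ofReal_add (by positivity) (by positivity)]
          refine ENNReal.ofReal_le_ofReal ?_
          have heq : ((8 * κ) ^ 2)⁻¹ + ((8 * κ) ^ 2)⁻¹ = 1 / (32 * κ ^ 2) := by
            field_simp
            ring
          exact le_of_eq heq
  -- n = 1 : a.s. trivially satisfied
  have hA1 : P ((A 1)ᶜ) = 0 := by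
    have hae : ∀ᵐ ω ∂P, ω ∈ A 1 := by
      filter_upwards [hbdd 0] with ω h
      simp only [hAdef, Set.mem_setOf_eq, Finset.range_one, Finset.sum_singleton,
        Nat.cast_one, div_one, Real.sqrt_one, one_mul]
      have : |X 0 ω - μ| ≤ 1 := abs_le.2 ⟨by linarith [h.1], by linarith [h.2]⟩
      linarith
    have := ae_iff.mp hae
    simpa [Set.compl_def] using this
  -- N facts
  have hN1 : 1 ≤ N := by
    rw [hN]
    exact Nat.one_le_ceil_iff.2 h8κ
  have hNle : ((N:ℝ) - 1) ≤ 8 * κ := by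
    have : (N:ℝ) < 8 * κ + 1 := by
      rw [hN]
      exact Nat.ceil_lt_add_one h8κ.le
    linarith
  -- union bound
  have hcompl : P ({ω | ∀ n ∈ Finset.Icc 1 N,
      Real.sqrt n * |(∑ j ∈ Finset.range n, X j ω) / n - μ| ≤ L}ᶜ)
      ≤ ENNReal.ofReal (1 / (4 * κ)) := by
    have hsplit : Finset.Icc 1 N = insert 1 (Finset.Icc 2 N) := by
      ext m; simp only [Finset.mem_Icc, Finset.mem_insert]; omega
    have h1c : {ω | ∀ n ∈ Finset.Icc 1 N,
        Real.sqrt n * |(∑ j ∈ Finset.range n, X j ω) / n - μ| ≤ L}ᶜ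
        = ⋃ n ∈ Finset.Icc 1 N, (A n)ᶜ := by
      rw [hGeq]
      simp
    rw [h1c]
    calc P (⋃ n ∈ Finset.Icc 1 N, (A n)ᶜ)
        ≤ ∑ n ∈ Finset.Icc 1 N, P ((A n)ᶜ) := measure_biUnion_finset_le _ _
      _ = P ((A 1)ᶜ) + ∑ n ∈ Finset.Icc 2 N, P ((A n)ᶜ) := by
          rw [hsplit, Finset.sum_insert (by simp)]
      _ = ∑ n ∈ Finset.Icc 2 N, P ((A n)ᶜ) := by rw [hA1, zero_add]
      _ ≤ (Finset.Icc 2 N).card • ENNReal.ofReal (1 / (32 * κ ^ 2)) :=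
          Finset.sum_le_card_nsmul _ _ _ (fun n hn =>
            hAbound n (le_trans (by norm_num) (Finset.mem_Icc.1 hn).1))
      _ = ((N - 1 : ℕ) : ℝ≥0∞) * ENNReal.ofReal (1 / (32 * κ ^ 2)) := by
          rw [Nat.card_Icc, nsmul_eq_mul]
          have : N + 1 - 2 = N - 1 := by omega
          rw [this]
      _ ≤ ENNReal.ofReal (1 / (4 * κ)) := by
          rw [← ENNReal.ofReal_natCast, ← ENNReal.ofReal_mul (by positivity)]
          refine ENNReal.ofReal_le_ofReal ?_
          have hc : ((N - 1 : ℕ) : ℝ) ≤ 8 * κ := by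
            rw [Nat.cast_sub hN1]
            simpa using hNle
          calc ((N - 1 : ℕ) : ℝ) * (1 / (32 * κ ^ 2)) ≤ (8 * κ) * (1 / (32 * κ ^ 2)) := by
                refine mul_le_mul_of_nonneg_right hc (by positivity)
            _ = 1 / (4 * κ) := by field_simp; ring
  -- conclude
  have hadd := measure_add_measure_compl (μ := P) hGmeas
  rw [measure_univ] at hadd
  rw [ENNReal.ofReal_sub _ (by positivity : (0:ℝ) ≤ 1 / (4 * κ)), ENNReal.ofReal_one]
  rw [tsub_le_iff_right]
  calc (1 : ℝ≥0∞) = P {ω | ∀ n ∈ Finset.Icc 1 N,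
        Real.sqrt n * |(∑ j ∈ Finset.range n, X j ω) / n - μ| ≤ L}
        + P ({ω | ∀ n ∈ Finset.Icc 1 N,
        Real.sqrt n * |(∑ j ∈ Finset.range n, X j ω) / n - μ| ≤ L}ᶜ) := hadd.symm
    _ ≤ P {ω | ∀ n ∈ Finset.Icc 1 N,
        Real.sqrt n * |(∑ j ∈ Finset.range n, X j ω) / n - μ| ≤ L}
        + ENNReal.ofReal (1 / (4 * κ)) := add_le_add_right hcompl _
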